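/- Let g(a_out, b_out, P) = ⟨P, C⟩ be the objective of the robust Wasserstein distance problem with marginals a, b, outlier masses ζ_μ, ζ_ν ∈ [0,1), constraints a ⪰ a_out, ‖a_out‖₁ = ζ_μ, b ⪰ b_out, ‖b_out‖₁ = ζ_ν, and P ∈ Π((a − a_out)/(1−ζ_μ), (b − b_out)/(1−ζ_ν)). Define the augmented problem with cost matrix C_aug ∈ ℝ₊^{(n+1)×(n+1)} given by (C_aug)_{ij} = C_{ij} for i,j ∈ [n] and 0 otherwise, augmented marginals a_aug = (a/(1−ζ_μ); ζ_ν/(1−ζ_ν)) and b_aug = (b/(1−ζ_ν); ζ_μ/(1−ζ_μ)), and feasible set D_h = {P_aug ∈ Π(a_aug, b_aug) : (P_aug)_{n+1,n+1} = 0} with objective h(P_aug) = ⟨P_aug, C_aug⟩. Then the map φ sending (a_out, b_out, P) to P_aug defined by (P_aug)_{ij} = P_{ij} for i,j∈[n], (P_aug)_{i,n+1} = (a_out)_i/(1−ζ_μ), (P_aug)_{n+1,j} = (b_out)_j/(1−ζ_ν), (P_aug)_{n+1,n+1} = 0, is a bijection from the feasible domain of g onto D_h, and h(φ(a_out,b_out,P))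 = g(a_out,b_out,P) for all feasible (a_out,b_out,P). -/

import Mathlib

open Finset

/-- Feasible domain of the robust Wasserstein distance problem. -/
noncomputable def robustDom (n : ℕ) (a b : Fin n → ℝ) (ζμ ζν : ℝ) :
    Set ((Fin n → ℝ) × (Fin n → ℝ) × Matrix (Fin n) (Fin n) ℝ) :=
  {x | (∀ i, 0 ≤ x.1 i) ∧ (∀ i, x.1 i ≤ a i) ∧ (∑ i, x.1 i) = ζμ ∧
       (∀ j, 0 ≤ x.2.1 j) ∧ (∀ j, x.2.1 j ≤ b j) ∧ (∑ j, x.2.1 j) = ζν ∧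
       (∀ i j, 0 ≤ x.2.2 i j) ∧
       (∀ i, (∑ j, x.2.2 i j) = (a i - x.1 i) / (1 - ζμ)) ∧
       (∀ j, (∑ i, x.2.2 i j) = (b j - x.2.1 j) / (1 - ζν))}

/-- Augmented first marginal. -/
noncomputable def aAug (n : ℕ) (a : Fin n → ℝ) (ζμ ζν : ℝ) : Fin (n + 1) → ℝ :=
  Fin.snoc (fun i => a i / (1 - ζμ)) (ζν / (1 - ζν))

/-- Augmented second marginal. -/
noncomputable def bAug (n : ℕ) (b : Fin n → ℝ) (ζμ ζν : ℝ) : Fin (n + 1) → ℝ :=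
  Fin.snoc (fun j => b j / (1 - ζν)) (ζμ / (1 - ζμ))

/-- Augmented cost matrix: equals `C` on the first `n × n` block and `0` elsewhere. -/
noncomputable def cAug (n : ℕ) (C : Matrix (Fin n) (Fin n) ℝ) :
    Matrix (Fin (n + 1)) (Fin (n + 1)) ℝ :=
  fun i j =>
    if hi : (i : ℕ) < n then
      if hj : (j : ℕ) < n then C ⟨i, hi⟩ ⟨j, hj⟩ else 0
    else 0

/-- Feasible domain of the augmented OT problem. -/
noncomputable def augDom (n : ℕ) (a b : Fin n → ℝ) (ζμ ζν : ℝ) :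
    Set (Matrix (Fin (n + 1)) (Fin (n + 1)) ℝ) :=
  {P | (∀ i j, 0 ≤ P i j) ∧
       (∀ i, (∑ j, P i j) = aAug n a ζμ ζν i) ∧
       (∀ j, (∑ i, P i j) = bAug n b ζμ ζν j) ∧
       P (Fin.last n) (Fin.last n) = 0}

/-- The map φ from the robust feasible domain to the augmented feasible domain. -/
noncomputable def phiMap (n : ℕ) (ζμ ζν : ℝ)
    (x : (Fin n → ℝ) × (Fin n → ℝ) × Matrix (Fin n) (Fin n) ℝ) :
    Matrix (Fin (n + 1)) (Fin (n + 1)) ℝ :=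
  fun i j =>
    if hi : (i : ℕ) < n then
      if hj : (j : ℕ) < n then x.2.2 ⟨i, hi⟩ ⟨j, hj⟩
      else x.1 ⟨i, hi⟩ / (1 - ζμ)
    else
      if hj : (j : ℕ) < n then x.2.1 ⟨j, hj⟩ / (1 - ζν) else 0


section AuxPhi
variable (n : ℕ) (ζμ ζν : ℝ) (x : (Fin n → ℝ) × (Fin n → ℝ) × Matrix (Fin n) (Fin n) ℝ)

lemma phi_cc (i j : Fin n) : phiMap n ζμ ζν x i.castSucc j.castSucc = x.2.2 i j := by
  simp [phiMap]

lemma phi_cl (i : Fin n) : phiMap n ζμ ζν x i.castSucc (Fin.last n) = x.1 i / (1 - ζμ) := by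
  simp [phiMap]

lemma phi_lc (j : Fin n) : phiMap n ζμ ζν x (Fin.last n) j.castSucc = x.2.1 j / (1 - ζν) := by
  simp [phiMap]

lemma phi_ll : phiMap n ζμ ζν x (Fin.last n) (Fin.last n) = 0 := by
  simp [phiMap]

lemma cAug_cc (C : Matrix (Fin n) (Fin n) ℝ) (i j : Fin n) :
    cAug n C i.castSucc j.castSucc = C i j := by simp [cAug]

lemma cAug_cl (C : Matrix (Fin n) (Fin n) ℝ) (i : Fin n) :
    cAug n C i.castSucc (Fin.last n) = 0 := by simp [cAug]

lemma cAug_l (C : Matrix (Fin n) (Fin n) ℝ) (j : Fin (n+1)) :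
    cAug n C (Fin.last n) j = 0 := by simp [cAug]

lemma aAug_c (a : Fin n → ℝ) (i : Fin n) :
    aAug n a ζμ ζν i.castSucc = a i / (1 - ζμ) := by simp [aAug]

lemma aAug_l (a : Fin n → ℝ) : aAug n a ζμ ζν (Fin.last n) = ζν / (1 - ζν) := by
  simp [aAug]

lemma bAug_c (b : Fin n → ℝ) (j : Fin n) :
    bAug n b ζμ ζν j.castSucc = b j / (1 - ζν) := by simp [bAug]

lemma bAug_l (b : Fin n → ℝ) : bAug n b ζμ ζν (Fin.last n) = ζμ / (1 - ζμ) := by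
  simp [bAug]
end AuxPhi

theorem robust_OT_reduction_bijection
    (n : ℕ) (a b : Fin n → ℝ) (C : Matrix (Fin n) (Fin n) ℝ) (ζμ ζν : ℝ)
    (hζμ0 : 0 ≤ ζμ) (hζμ1 : ζμ < 1) (hζν0 : 0 ≤ ζν) (hζν1 : ζν < 1)
    (ha : ∀ i, 0 ≤ a i) (hb : ∀ j, 0 ≤ b j)
    (ha1 : ∑ i, a i = 1) (hb1 : ∑ j, b j = 1)
    (hC : ∀ i j, 0 ≤ C i j) :
    Set.BijOn (phiMap n ζμ ζν) (robustDom n a b ζμ ζν) (augDom n a b ζμ ζν) ∧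
    ∀ x ∈ robustDom n a b ζμ ζν,
      (∑ i, ∑ j, phiMap n ζμ ζν x i j * cAug n C i j)
        = ∑ i, ∑ j, x.2.2 i j * C i j := by
  have hμ : (0:ℝ) < 1 - ζμ := by linarith
  have hν : (0:ℝ) < 1 - ζν := by linarith
  have hμ' : (1:ℝ) - ζμ ≠ 0 := ne_of_gt hμ
  have hν' : (1:ℝ) - ζν ≠ 0 := ne_of_gt hν
  have hmem : ∀ x ∈ robustDom n a b ζμ ζν, phiMap n ζμ ζν x ∈ augDom n a b ζμ ζν := by
    rintro x ⟨h1, h2, h3, h4, h5, h6, h7, h8, h9⟩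
    refine ⟨?_, ?_, ?_, phi_ll n ζμ ζν x⟩
    · intro i j
      unfold phiMap
      split_ifs with hi hj hj
      · exact h7 _ _
      · exact div_nonneg (h1 _) hμ.le
      · exact div_nonneg (h4 _) hν.le
      · exact le_refl 0
    · intro i
      induction i using Fin.lastCases with
      | last =>
        rw [Fin.sum_univ_castSucc]
        simp only [phi_lc, phi_ll, aAug_l]
        rw [← Finset.sum_div, h6, add_zero]
      | cast i =>
        rw [Fin.sum_univ_castSucc]
        simp only [phi_cc, phi_cl, aAug_c, h8]
        field_simp
        ring
    · intro j
      induction j using Fin.lastCases with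
      | last =>
        rw [Fin.sum_univ_castSucc]
        simp only [phi_cl, phi_ll, bAug_l]
        rw [← Finset.sum_div, h3, add_zero]
      | cast j =>
        rw [Fin.sum_univ_castSucc]
        simp only [phi_cc, phi_lc, bAug_c, h9]
        field_simp
        ring
  constructor
  · refine ⟨hmem, ?_, ?_⟩
    · rintro x hx y hy h
      have hA : ∀ i, x.1 i = y.1 i := by
        intro i
        have := congrFun (congrFun h i.castSucc) (Fin.last n)
        rw [phi_cl, phi_cl] at this
        exact (div_left_inj' hμ').mp this
      have hB : ∀ j, x.2.1 j = y.2.1 j := by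
        intro j
        have := congrFun (congrFun h (Fin.last n)) j.castSucc
        rw [phi_lc, phi_lc] at this
        exact (div_left_inj' hν').mp this
      have hP : ∀ i j, x.2.2 i j = y.2.2 i j := by
        intro i j
        have := congrFun (congrFun h i.castSucc) j.castSucc
        rwa [phi_cc, phi_cc] at this
      exact Prod.ext (funext hA) (Prod.ext (funext hB) (by ext i j; exact hP i j))
    · rintro P ⟨hP0, hPr, hPc, hPll⟩
      set x : (Fin n → ℝ) × (Fin n → ℝ) × Matrix (Fin n) (Fin n) ℝ :=
        (fun i => P i.castSucc (Fin.last n) * (1 - ζμ),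
         fun j => P (Fin.last n) j.castSucc * (1 - ζν),
         fun i j => P i.castSucc j.castSucc) with hxdef
      have hrow : ∀ i : Fin n,
          (∑ j : Fin n, P i.castSucc j.castSucc) + P i.castSucc (Fin.last n) = a i / (1 - ζμ) := by
        intro i
        have := hPr i.castSucc
        rwa [Fin.sum_univ_castSucc, aAug_c] at this
      have hcol : ∀ j : Fin n,
          (∑ i : Fin n, P i.castSucc j.castSucc) + P (Fin.last n) j.castSucc = b j / (1 - ζν) := by
        intro j
        have := hPc j.castSucc
        rwa [Fin.sum_univ_castSucc, bAug_c] at this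
      have hrl : (∑ j : Fin n, P (Fin.last n) j.castSucc) = ζν / (1 - ζν) := by
        have := hPr (Fin.last n)
        rw [Fin.sum_univ_castSucc, aAug_l, hPll, add_zero] at this
        exact this
      have hcl : (∑ i : Fin n, P i.castSucc (Fin.last n)) = ζμ / (1 - ζμ) := by
        have := hPc (Fin.last n)
        rw [Fin.sum_univ_castSucc, bAug_l, hPll, add_zero] at this
        exact this
      refine ⟨x, ⟨?_, ?_, ?_, ?_, ?_, ?_, ?_, ?_, ?_⟩, ?_⟩
      · intro i; exact mul_nonneg (hP0 _ _) hμ.le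
      · intro i
        have h := hrow i
        have hnn : 0 ≤ ∑ j : Fin n, P i.castSucc j.castSucc :=
          Finset.sum_nonneg fun j _ => hP0 _ _
        have : P i.castSucc (Fin.last n) ≤ a i / (1 - ζμ) := by linarith
        have := (le_div_iff₀ hμ).mp this
        simpa [hxdef] using this
      · simp only [hxdef, ← Finset.sum_mul, hcl]
        field_simp
      · intro j; exact mul_nonneg (hP0 _ _) hν.le
      · intro j
        have h := hcol j
        have hnn : 0 ≤ ∑ i : Fin n, P i.castSucc j.castSucc :=
          Finset.sum_nonneg fun i _ => hP0 _ _
        have : P (Fin.last n) j.castSucc ≤ b j / (1 - ζν) := by linarith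
        have := (le_div_iff₀ hν).mp this
        simpa [hxdef] using this
      · simp only [hxdef, ← Finset.sum_mul, hrl]
        field_simp
      · intro i j; exact hP0 _ _
      · intro i
        have h := hrow i
        simp only [hxdef]
        have h2 : (∑ j : Fin n, P i.castSucc j.castSucc)
            = a i / (1 - ζμ) - P i.castSucc (Fin.last n) := by linarith
        rw [h2]
        field_simp
      · intro j
        have h := hcol j
        simp only [hxdef]
        have h2 : (∑ i : Fin n, P i.castSucc j.castSucc)
            = b j / (1 - ζν) - P (Fin.last n) j.castSucc := by linarith
        rw [h2]
        field_simp
      · ext i j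
        induction i using Fin.lastCases with
        | last =>
          induction j using Fin.lastCases with
          | last => rw [phi_ll, hPll]
          | cast j =>
            rw [phi_lc]; simp only [hxdef]
            rw [mul_div_assoc, div_self hν', mul_one]
        | cast i =>
          induction j using Fin.lastCases with
          | last =>
            rw [phi_cl]; simp only [hxdef]
            rw [mul_div_assoc, div_self hμ', mul_one]
          | cast j => rw [phi_cc]
  · intro x hx
    rw [Fin.sum_univ_castSucc]
    have hlast : (∑ j, phiMap n ζμ ζν x (Fin.last n) j * cAug n C (Fin.last n) j) = 0 := by
      apply Finset.sum_eq_zero; intro j _; rw [cAug_l, mul_zero]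
    rw [hlast, add_zero]
    apply Finset.sum_congr rfl
    intro i _
    rw [Fin.sum_univ_castSucc, cAug_cl, mul_zero, add_zero]
    apply Finset.sum_congr rfl
    intro j _
    rw [phi_cc, cAug_cc]
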